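/- Let p be a prime and let G = ℤ_p × Γ where ℤ_p is the additive group of p-adic integers with its usual compact topology and Γ is ℤ_p equipped with the discrete topology. Let H = {(g,g) : g ∈ ℤ_p} (diagonal) and N = {(g,−g) : g ∈ ℤ_p} (antidiagonal). If p is odd, then H ∩ N = {0}, H + N = G as abstract groups, and both H and N are closed discrete subgroups of G, while G is not discrete. -/

import Mathlib

/-- `ℤ_p` with the discrete topology. -/
def PadicDiscrete (p : ℕ) [Fact p.Prime] : Type := ℤ_[p]

noncomputable instance (p : ℕ) [Fact p.Prime] : AddCommGroup (PadicDiscrete p) :=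
  inferInstanceAs (AddCommGroup ℤ_[p])

instance (p : ℕ) [Fact p.Prime] : TopologicalSpace (PadicDiscrete p) := ⊥

instance (p : ℕ) [Fact p.Prime] : DiscreteTopology (PadicDiscrete p) := ⟨rfl⟩

/-- The identity of `ℤ_p`, viewed as a homomorphism to the discrete copy. -/
noncomputable def toPadicDiscrete (p : ℕ) [Fact p.Prime] : ℤ_[p] →+ PadicDiscrete p where
  toFun x := x
  map_zero' := rfl
  map_add' _ _ := rfl

lemma isUnit_two_padic (p : ℕ) [Fact p.Prime] (hp : p ≠ 2) : IsUnit (2 : ℤ_[p]) := by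
  rw [PadicInt.isUnit_iff]
  have h1 : ‖(2 : ℤ_[p])‖ ≤ 1 := PadicInt.norm_le_one _
  rcases lt_or_eq_of_le h1 with h | h
  · exfalso
    have h2 : ((p:ℤ)) ∣ (2:ℤ) := by
      have := (PadicInt.norm_int_lt_one_iff_dvd (2:ℤ)).mp (by exact_mod_cast h)
      exact_mod_cast this
    have h3 : p ∣ 2 := by exact_mod_cast h2
    exact hp ((Nat.prime_dvd_prime_iff_eq (Fact.out) Nat.prime_two).mp h3)
  · exact h

theorem padic_diagonal_antidiagonal (p : ℕ) [Fact p.Prime] (hp : p ≠ 2) :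
    let G := ℤ_[p] × PadicDiscrete p
    let H : AddSubgroup G :=
      ((AddMonoidHom.id ℤ_[p]).prod (toPadicDiscrete p)).range
    let N : AddSubgroup G :=
      ((AddMonoidHom.id ℤ_[p]).prod ((toPadicDiscrete p).comp (negAddMonoidHom (α := ℤ_[p])))).range
    H ⊓ N = ⊥ ∧ H ⊔ N = ⊤ ∧
      IsClosed (H : Set G) ∧ IsClosed (N : Set G) ∧
      DiscreteTopology H ∧ DiscreteTopology N ∧
      ¬ DiscreteTopology G := by
  intro G H N
  obtain ⟨u, hu⟩ := isUnit_two_padic p hp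
  -- membership characterizations
  have hH : ∀ g : G, g ∈ H ↔ ∃ x : ℤ_[p], ((x, x) : G) = g := by
    intro g
    constructor
    · rintro ⟨x, rfl⟩; exact ⟨x, rfl⟩
    · rintro ⟨x, rfl⟩; exact ⟨x, rfl⟩
  have hN : ∀ g : G, g ∈ N ↔ ∃ x : ℤ_[p], ((x, -x) : G) = g := by
    intro g
    constructor
    · rintro ⟨x, rfl⟩; exact ⟨x, rfl⟩
    · rintro ⟨x, rfl⟩; exact ⟨x, rfl⟩
  have h2ne : (2 : ℤ_[p]) ≠ 0 := by
    intro h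
    have := isUnit_two_padic p hp
    rw [h] at this
    exact not_isUnit_zero this
  refine ⟨?_, ?_, ?_, ?_, ?_, ?_, ?_⟩
  · -- H ⊓ N = ⊥
    ext g
    simp only [AddSubgroup.mem_inf, AddSubgroup.mem_bot]
    constructor
    · rintro ⟨hg1, hg2⟩
      obtain ⟨x, hx⟩ := (hH g).mp hg1
      obtain ⟨y, hy⟩ := (hN g).mp hg2
      have hxy : ((x, x) : G) = ((y, -y) : G) := hx.trans hy.symm
      have h1 : x = y := congrArg Prod.fst hxy
      have h2 : (x : ℤ_[p]) = -y := congrArg Prod.snd hxy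
      have h5 : y = -y := h1.symm.trans h2
      have hy0 : y = 0 := by
        have h6 : 2 * y = 0 := by rw [two_mul]; nth_rewrite 1 [h5]; exact neg_add_cancel y
        exact (mul_eq_zero.mp h6).resolve_left h2ne
      have hx0 : x = 0 := h1.trans hy0
      rw [← hx, hx0]; rfl
    · rintro rfl
      refine ⟨(hH 0).mpr ⟨0, rfl⟩, (hN 0).mpr ⟨0, ?_⟩⟩
      apply Prod.ext
      · rfl
      · show (-(0:ℤ_[p]) : ℤ_[p]) = 0; exact neg_zero
  · -- H ⊔ N = ⊤
    rw [eq_top_iff]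
    rintro ⟨a, b⟩ -
    have hb : (b : ℤ_[p]) = b := rfl
    set x := ↑u⁻¹ * (a + (show ℤ_[p] from b)) with hxdef
    set y := ↑u⁻¹ * (a - (show ℤ_[p] from b)) with hydef
    have hu' : (u : ℤ_[p]) = 2 := hu
    have hxy : x + y = a := by
      rw [hxdef, hydef, ← mul_add]
      have : (a + (show ℤ_[p] from b)) + (a - (show ℤ_[p] from b)) = 2 * a := by ring
      rw [this, ← hu', ← mul_assoc, Units.inv_mul, one_mul]
    have hxy' : x - y = (show ℤ_[p] from b) := by
      rw [hxdef, hydef, ← mul_sub]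
      have : (a + (show ℤ_[p] from b)) - (a - (show ℤ_[p] from b)) = 2 * (show ℤ_[p] from b) := by ring
      rw [this, ← hu', ← mul_assoc, Units.inv_mul, one_mul]
    have : ((a, b) : G) = ((x, x) : G) + ((y, -y) : G) := by
      apply Prod.ext
      · simp [hxy]
      · show b = (show PadicDiscrete p from x) + (show PadicDiscrete p from (-y))
        show (show ℤ_[p] from b) = x + (-y)
        rw [← sub_eq_add_neg, hxy']
    rw [this]
    exact AddSubgroup.add_mem_sup ((hH _).mpr ⟨x, rfl⟩) ((hN _).mpr ⟨y, rfl⟩)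
  · -- H closed
    have : (H : Set G) = (fun g : G => g.1 - (show ℤ_[p] from g.2)) ⁻¹' {0} := by
      ext g
      simp only [SetLike.mem_coe, Set.mem_preimage, Set.mem_singleton_iff, sub_eq_zero]
      rw [hH]
      constructor
      · rintro ⟨x, rfl⟩; exact sub_self x
      · intro h
        exact ⟨g.1, Prod.ext rfl (sub_eq_zero.mp h)⟩
    rw [this]
    exact isClosed_singleton.preimage
      (Continuous.sub continuous_fst
        ((continuous_of_discreteTopology (α := PadicDiscrete p)
          (f := fun y : PadicDiscrete p => (show ℤ_[p] from y))).comp continuous_snd))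
  · -- N closed
    have : (N : Set G) = (fun g : G => g.1 + (show ℤ_[p] from g.2)) ⁻¹' {0} := by
      ext g
      simp only [SetLike.mem_coe, Set.mem_preimage, Set.mem_singleton_iff]
      rw [hN]
      constructor
      · rintro ⟨x, rfl⟩; show x + -x = 0; ring
      · intro h
        refine ⟨g.1, Prod.ext rfl ?_⟩
        exact neg_eq_of_add_eq_zero_right h
    rw [this]
    exact isClosed_singleton.preimage
      (Continuous.add continuous_fst
        ((continuous_of_discreteTopology (α := PadicDiscrete p)
          (f := fun y : PadicDiscrete p => (show ℤ_[p] from y))).comp continuous_snd))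
  · -- H discrete
    rw [discreteTopology_iff_isOpen_singleton]
    rintro ⟨⟨a, b⟩, hab⟩
    obtain ⟨x, hx⟩ := (hH _).mp hab
    have : ({⟨(a, b), hab⟩} : Set H) =
        (Subtype.val) ⁻¹' (Set.univ ×ˢ ({b} : Set (PadicDiscrete p))) := by
      ext ⟨⟨c, d⟩, hcd⟩
      simp only [Set.mem_singleton_iff, Set.mem_preimage, Set.mem_prod, Set.mem_univ, true_and]
      constructor
      · intro hw; exact congrArg (fun w : H => (w : G).2) hw
      · intro h
        obtain ⟨y, hy⟩ := (hH _).mp hcd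
        have h1 : y = c := congrArg Prod.fst hy
        have h2 : (show PadicDiscrete p from y) = d := congrArg Prod.snd hy
        have h3 : x = a := congrArg Prod.fst hx
        have h4 : (show PadicDiscrete p from x) = b := congrArg Prod.snd hx
        have hdb : d = b := h
        apply Subtype.ext
        apply Prod.ext
        · show c = a
          rw [← h1, ← h3]
          exact h2.trans (hdb.trans h4.symm)
        · exact hdb
    rw [this]
    exact (isOpen_univ.prod (isOpen_discrete _)).preimage continuous_subtype_val
  · -- N discrete
    rw [discreteTopology_iff_isOpen_singleton]
    rintro ⟨⟨a, b⟩, hab⟩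
    obtain ⟨x, hx⟩ := (hN _).mp hab
    have : ({⟨(a, b), hab⟩} : Set N) =
        (Subtype.val) ⁻¹' (Set.univ ×ˢ ({b} : Set (PadicDiscrete p))) := by
      ext ⟨⟨c, d⟩, hcd⟩
      simp only [Set.mem_singleton_iff, Set.mem_preimage, Set.mem_prod, Set.mem_univ, true_and]
      constructor
      · intro hw; exact congrArg (fun w : N => (w : G).2) hw
      · intro h
        obtain ⟨y, hy⟩ := (hN _).mp hcd
        have h1 : y = c := congrArg Prod.fst hy
        have h2 : (show PadicDiscrete p from (-y)) = d := congrArg Prod.snd hy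
        have h3 : x = a := congrArg Prod.fst hx
        have h4 : (show PadicDiscrete p from (-x)) = b := congrArg Prod.snd hx
        have hdb : d = b := h
        apply Subtype.ext
        apply Prod.ext
        · show c = a
          rw [← h1, ← h3]
          exact neg_injective (G := ℤ_[p]) (h2.trans (hdb.trans h4.symm))
        · exact hdb
    rw [this]
    exact (isOpen_univ.prod (isOpen_discrete _)).preimage continuous_subtype_val
  · -- G not discrete
    intro hG
    have hopen : IsOpen ({(0 : ℤ_[p])} : Set ℤ_[p]) := by
      have h0 : IsOpen ({((0,0) : G)} : Set G) := isOpen_discrete _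
      have : ({(0:ℤ_[p])} : Set ℤ_[p]) = (fun x : ℤ_[p] => ((x, 0) : G)) ⁻¹' {((0,0) : G)} := by
        ext x
        simp [Prod.ext_iff]
      rw [this]
      exact h0.preimage (continuous_id.prodMk continuous_const)
    have : DiscreteTopology ℤ_[p] := by
      rw [discreteTopology_iff_isOpen_singleton]
      intro a
      have : ({a} : Set ℤ_[p]) = (fun x => x - a) ⁻¹' {0} := by
        ext x; simp [sub_eq_zero]
      rw [this]
      exact hopen.preimage (continuous_id.sub continuous_const)
    have hfin : Finite ℤ_[p] := finite_of_compact_of_discrete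
    exact (not_finite_iff_infinite.mpr inferInstance) hfin
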